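/- Let M be an m×n binary matrix. If there is a permutation of the columns of M after which every row of the resulting matrix has the form 0^r 1^s 0^t for some non-negative integers r, s, t (all 1's of the row are consecutive), then G(M) is word-representable. -/

import Mathlib

/-- A word `w` over alphabet `V` represents the graph `G`: every vertex occurs in `w`,
and two distinct vertices are adjacent iff their letters alternate in `w`. -/
def WordRepresents {V : Type*} [DecidableEq V] (w : List V) (G : SimpleGraph V) : Prop :=
  (∀ v : V, v ∈ w) ∧
  ∀ x y : V, x ≠ y →
    (G.Adj x y ↔ (w.filter (fun z => z == x || z == y)).Chain' (· ≠ ·))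

/-- A graph is word-representable if some word represents it. -/
def WordRepresentable {V : Type*} [DecidableEq V] (G : SimpleGraph V) : Prop :=
  ∃ w : List V, WordRepresents w G

/-- The split graph `G(M)` of an `m × n` binary matrix `M`: vertices `Sum.inl j`
(`j : Fin n`) form a clique, vertices `Sum.inr i` (`i : Fin m`) form an independent set,
and `Sum.inr i` is adjacent to `Sum.inl j` iff `M i j = true`. -/
def splitGraph {m n : ℕ} (M : Fin m → Fin n → Bool) : SimpleGraph (Fin n ⊕ Fin m) :=
  SimpleGraph.fromRel (fun x y =>
    match x, y with
    | Sum.inl _, Sum.inl _ => True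
    | Sum.inl j, Sum.inr i => M i j = true
    | _, _ => False)

/-! ### General list helper lemmas -/

section Helpers

variable {α : Type*} {β : Type*}

private lemma sorted_filter_eq [LinearOrder α] (l : List α) (hl : l.Pairwise (· < ·))
    (q : α → Bool) (ks : List α) (hks : ks.Pairwise (· < ·))
    (hmem : ∀ a, (a ∈ l ∧ q a = true) ↔ a ∈ ks) : l.filter q = ks := by
  haveI : IsAntisymm α (· < ·) := ⟨fun a b h1 h2 => ((lt_asymm h1) h2).elim⟩
  refine List.Perm.eq_of_pairwise' (hl.filter q) hks ?_
  rw [List.perm_ext_iff_of_nodup ((hl.filter q).imp ne_of_lt) (hks.imp ne_of_lt)]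
  intro a
  rw [List.mem_filter, ← hmem a]

private lemma filter_finRange_eval {k : ℕ} (q : Fin k → Bool) (ks : List (Fin k))
    (hks : ks.Pairwise (· < ·)) (hmem : ∀ j, q j = true ↔ j ∈ ks) :
    (List.finRange k).filter q = ks := by
  refine sorted_filter_eq _ (List.pairwise_lt_finRange k) q ks hks ?_
  intro a
  simp [hmem a]

private lemma flatMap_support (l : List α) (F : α → List β) (q : α → Bool)
    (h : ∀ a ∈ l, q a = false → F a = []) :
    l.flatMap F = (l.filter q).flatMap F := by
  induction l with
  | nil => rfl
  | cons a l ih =>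
    rcases hq : q a with _ | _
    · simp [List.filter_cons, hq, h a (by simp) hq,
        ih (fun b hb hb' => h b (by simp [hb]) hb')]
    · simp [List.filter_cons, hq, ih (fun b hb hb' => h b (by simp [hb]) hb')]

private lemma flatMap_range_eval (N : ℕ) (F : ℕ → List β) (ks : List ℕ)
    (hks : ks.Pairwise (· < ·)) (hb : ∀ k ∈ ks, k < N)
    (hs : ∀ g < N, g ∉ ks → F g = []) :
    (List.range N).flatMap F = ks.flatMap F := by
  rw [flatMap_support (List.range N) F (fun g => decide (g ∈ ks))
    (by intro a ha ha'; simp at ha ha'; exact hs a ha ha')]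
  congr 1
  refine sorted_filter_eq _ ((List.pairwise_lt_range (n := N))) _ ks hks ?_
  intro a
  simp only [List.mem_range, decide_eq_true_eq]
  constructor
  · rintro ⟨_, h2⟩; exact h2
  · intro h2; exact ⟨hb a h2, h2⟩

private lemma flatMap_range_split (N a : ℕ) (ha : a < N) (F : ℕ → List β)
    (h : ∀ g < a, F g = []) :
    (List.range N).flatMap F = F a ++ (List.range' (a+1) (N-a-1)).flatMap F := by
  have hsplit : List.range N = List.range' 0 a ++ List.range' a (N - a) := by
    rw [List.range_eq_range']
    have := List.range'_append (s := 0) (m := a) (n := N - a) (step := 1)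
    simp only [one_mul, zero_add] at this
    rw [this]
    congr 1
    omega
  have h2 : N - a = (N - a - 1) + 1 := by omega
  rw [hsplit, List.flatMap_append, h2, List.range'_succ]
  have : (List.range' 0 a).flatMap F = [] := by
    rw [List.flatMap_eq_nil_iff]
    intro x hx
    exact h x (by simpa using (List.mem_range'_1.1 hx).2)
  simp [this]

private lemma sum_map_ite (N a c : ℕ) :
    ((List.range N).map (fun g => if g = a then c else 0)).sum = if a < N then c else 0 := by
  induction N with
  | zero => simp
  | succ N ih =>
    rw [List.range_succ, List.map_append, List.sum_append, ih]
    simp only [List.map_cons, List.map_nil, List.sum_cons, List.sum_nil]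
    split_ifs <;> omega

private lemma sum_map_add (l : List α) (f g : α → ℕ) :
    (l.map (fun a => f a + g a)).sum = (l.map f).sum + (l.map g).sum := by
  induction l with
  | nil => simp
  | cons a l ih => simp [ih]; omega

private lemma cntP_aux {α : Type*} [DecidableEq α] (q : α → Bool) (c : α) :
    ∀ (l : List α), l.Nodup → c ∈ l →
      l.countP (fun b => decide (b = c) && q b) = if q c = true then 1 else 0 := by
  intro l
  induction l with
  | nil => intro _ hc; cases hc
  | cons a l ih =>
    intro hnd hc
    rw [List.countP_cons]
    by_cases hac : a = c
    · subst hac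
      have hz : l.countP (fun b => decide (b = a) && q b) = 0 := by
        rw [List.countP_eq_zero]
        intro b hb
        have : b ≠ a := fun hba => (List.nodup_cons.1 hnd).1 (hba ▸ hb)
        simp [this]
      rw [hz]
      by_cases hqa : q a = true <;> simp [hqa]
    · have hcl : c ∈ l := by
        rcases List.mem_cons.1 hc with h | h
        · exact absurd h.symm hac
        · exact h
      rw [ih (List.nodup_cons.1 hnd).2 hcl]
      simp [hac]

private lemma cntP_filter {α : Type*} [DecidableEq α] (l : List α) (hl : l.Nodup)
    (q : α → Bool) (c : α) (hc : c ∈ l) :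
    (l.filter q).countP (fun b => decide (b = c)) = if q c = true then 1 else 0 := by
  rw [List.countP_filter]
  exact cntP_aux q c l hl hc

private lemma length_eq_countP_add {α : Type*} [DecidableEq α] {x y : α} (hxy : x ≠ y) :
    ∀ P : List α, (∀ z ∈ P, z = x ∨ z = y) →
      P.length = P.countP (fun z => decide (z = x)) + P.countP (fun z => decide (z = y)) := by
  intro P
  induction P with
  | nil => simp
  | cons a l ih =>
    intro h
    have hl := ih (fun z hz => h z (by simp [hz]))
    rcases h a (by simp) with rfl | rfl
    · have e2 : ¬ (a = y) := hxy
      simp only [List.length_cons, List.countP_cons, hl, decide_eq_true_eq, e2]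
      simp
      omega
    · have e2 : ¬ (a = x) := Ne.symm hxy
      simp only [List.length_cons, List.countP_cons, hl, decide_eq_true_eq, e2]
      simp
      omega

private lemma no_alt {α : Type*} [DecidableEq α] (x y : α) (hxy : x ≠ y) (P : List α)
    (hcx : P.countP (fun z => decide (z = x)) = 2)
    (hcy : P.countP (fun z => decide (z = y)) = 2)
    (hall : ∀ z ∈ P, z = x ∨ z = y)
    (hhead : P.head? = some x) :
    ¬ (P ++ [y, x]).Chain' (· ≠ ·) := by
  have hlen : P.length = 4 := by rw [length_eq_countP_add hxy P hall, hcx, hcy]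
  match P, hlen with
  | [b1, b2, b3, b4], _ =>
    have hb1 : b1 = x := by simpa using hhead
    subst hb1
    rcases hall b2 (by simp) with rfl | rfl <;>
      rcases hall b3 (by simp) with rfl | rfl <;>
        rcases hall b4 (by simp) with rfl | rfl <;>
          simp_all [List.countP_cons, List.Chain', List.isChain_cons_cons]

end Helpers


/-! ### The word construction -/

/-- Start-copies of independent letters at gap `g`. -/
def startsL (n : ℕ) {m : ℕ} (r : Fin m → ℕ) (g : ℕ) : List (Fin n ⊕ Fin m) :=
  ((List.finRange m).filter (fun i => decide (r i = g))).map Sum.inr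

/-- End-copies of independent letters at gap `g`. -/
def endsL (n : ℕ) {m : ℕ} (r s : Fin m → ℕ) (g : ℕ) : List (Fin n ⊕ Fin m) :=
  ((List.finRange m).filter (fun i => decide (r i + s i = g))).map Sum.inr

/-- The clique letter at gap `g` (empty for `g = n`). -/
def colL {n : ℕ} (m : ℕ) (τ : Equiv.Perm (Fin n)) (g : ℕ) : List (Fin n ⊕ Fin m) :=
  ((List.finRange n).filter (fun (c : Fin n) => decide ((c : ℕ) = g))).map (fun c => Sum.inl (τ c))

/-- The representing word. -/
def repWord {n m : ℕ} (τ : Equiv.Perm (Fin n)) (r s : Fin m → ℕ) : List (Fin n ⊕ Fin m) :=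
  (List.range (n+1)).flatMap (fun g => startsL n r g ++ endsL n r s g ++ colL m τ g)
  ++ (List.finRange n).map (fun c => Sum.inl (τ c))
  ++ ((List.range (n+1)).flatMap (startsL n r)).reverse

section Chain

variable {m n : ℕ} (τ : Equiv.Perm (Fin n)) (r s : Fin m → ℕ)

private lemma chain_inl_inl (j₁ j₂ : Fin n) (hne : j₁ ≠ j₂) :
    ((repWord τ r s).filter
      (fun z => decide (z = (Sum.inl j₁ : Fin n ⊕ Fin m)) || decide (z = Sum.inl j₂))).Chain'
      (· ≠ ·) := by
  set x : Fin n ⊕ Fin m := Sum.inl j₁ with hx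
  set y : Fin n ⊕ Fin m := Sum.inl j₂ with hy
  set p : Fin n ⊕ Fin m → Bool := fun z => decide (z = x) || decide (z = y) with hp
  set jA := τ.symm j₁ with hjA
  set jB := τ.symm j₂ with hjB
  have hAB : jA ≠ jB := fun hc => hne (by rw [hjA, hjB] at hc; simpa using congrArg τ hc)
  have hAv : ((jA : ℕ)) ≠ ((jB : ℕ)) := fun hc => hAB (Fin.val_injective hc)
  have hstarts : ∀ g, (startsL n r g).filter p = [] := by
    intro g
    rw [startsL, List.filter_map, List.filter_eq_nil_iff.2 (fun a _ => ?_)]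
    · simp
    · simp [hp, hx, hy, Function.comp]
  have hends : ∀ g, (endsL n r s g).filter p = [] := by
    intro g
    rw [endsL, List.filter_map, List.filter_eq_nil_iff.2 (fun a _ => ?_)]
    · simp
    · simp [hp, hx, hy, Function.comp]
  have hcol : ∀ g, (colL m τ g).filter p =
      if g = (jA : ℕ) then [x] else if g = (jB : ℕ) then [y] else [] := by
    intro g
    rw [colL, List.filter_map, List.filter_filter,
      filter_finRange_eval _ (if g = (jA : ℕ) then [jA] else if g = (jB : ℕ) then [jB] else [])
        ?_ ?_]
    · split_ifs <;> simp [hx, hy, hjA, hjB]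
    · split_ifs <;> simp
    · intro c
      simp only [Function.comp, hp, hx, hy, Bool.or_eq_true, Bool.and_eq_true,
        decide_eq_true_eq, Sum.inl.injEq, Equiv.apply_eq_iff_eq_symm_apply, ← hjA, ← hjB]
      split_ifs <;> simp [Fin.ext_iff] <;> omega
  have htail : (((List.range (n+1)).flatMap (startsL n r)).reverse).filter p = [] := by
    rw [List.filter_reverse, List.filter_flatMap]
    simp [hstarts]
  have hb2 : ((List.finRange n).map (fun c => Sum.inl (τ c))).filter p =
      if (jA : ℕ) < (jB : ℕ) then [x, y] else [y, x] := by
    rw [List.filter_map,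
      filter_finRange_eval _ (if (jA : ℕ) < (jB : ℕ) then [jA, jB] else [jB, jA]) ?_ ?_]
    · split_ifs <;> simp [hx, hy, hjA, hjB]
    · split_ifs with hh <;> simp [List.pairwise_cons] <;> exact Fin.lt_def.mpr (by omega)
    · intro c
      simp only [Function.comp, hp, hx, hy, Bool.or_eq_true,
        decide_eq_true_eq, Sum.inl.injEq, Equiv.apply_eq_iff_eq_symm_apply, ← hjA, ← hjB]
      split_ifs <;> simp [Fin.ext_iff] <;> omega
  have hxy : x ≠ y := by simp [hx, hy, hne]
  rw [repWord, List.filter_append, List.filter_append, List.filter_flatMap, htail, hb2]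
  simp only [List.filter_append, hstarts, hends, hcol, List.nil_append, List.append_nil]
  rcases Nat.lt_or_ge (jA : ℕ) (jB : ℕ) with hAB' | hAB'
  · rw [flatMap_range_eval _ _ [(jA : ℕ), (jB : ℕ)]
      (by simp [hAB'])
      (by intro k hk; simp at hk
          rcases hk with rfl | rfl
          exacts [Nat.lt_succ_of_lt jA.isLt, Nat.lt_succ_of_lt jB.isLt])
      (by intro g hg hgk; simp at hgk; split_ifs <;> simp_all)]
    have h1 : ¬ ((jB : ℕ) = (jA : ℕ)) := by omega
    simp [h1, hAB', List.Chain', List.isChain_cons_cons, hxy]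
    exact Ne.symm hxy
  · have hAB'' : (jB : ℕ) < (jA : ℕ) := by omega
    rw [flatMap_range_eval _ _ [(jB : ℕ), (jA : ℕ)]
      (by simp [hAB''])
      (by intro k hk; simp at hk
          rcases hk with rfl | rfl
          exacts [Nat.lt_succ_of_lt jB.isLt, Nat.lt_succ_of_lt jA.isLt])
      (by intro g hg hgk; simp at hgk; split_ifs <;> simp_all)]
    have h1 : ¬ ((jA : ℕ) < (jB : ℕ)) := by omega
    have h2 : ¬ ((jB : ℕ) = (jA : ℕ)) := by omega
    simp [h1, h2, List.Chain', List.isChain_cons_cons, hxy]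
    exact Ne.symm hxy

private lemma chain_inl_inr (hrs : ∀ i, r i + s i ≤ n) (j' : Fin n) (i : Fin m) :
    (((repWord τ r s).filter
      (fun z => decide (z = (Sum.inl j' : Fin n ⊕ Fin m)) || decide (z = Sum.inr i))).Chain'
      (· ≠ ·))
    ↔ (r i ≤ ((τ.symm j' : Fin n) : ℕ) ∧ ((τ.symm j' : Fin n) : ℕ) < r i + s i) := by
  set x : Fin n ⊕ Fin m := Sum.inl j' with hx
  set y : Fin n ⊕ Fin m := Sum.inr i with hy
  set p : Fin n ⊕ Fin m → Bool := fun z => decide (z = x) || decide (z = y) with hp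
  set jf := τ.symm j' with hjf
  set j := ((jf : Fin n) : ℕ) with hj
  set a := r i with ha
  set e := r i + s i with he
  have hae : a ≤ e := by omega
  have hen : e ≤ n := hrs i
  have hjn : j < n := jf.isLt
  have hxy : x ≠ y := by simp [hx, hy]
  have hyx : y ≠ x := Ne.symm hxy
  have hstarts : ∀ g, (startsL n r g).filter p = if a = g then [y] else [] := by
    intro g
    rw [startsL, List.filter_map, List.filter_filter,
      filter_finRange_eval _ (if a = g then [i] else []) ?_ ?_]
    · split_ifs <;> simp [hy]
    · split_ifs <;> simp
    · intro c
      simp only [Function.comp, hp, hx, hy, Bool.or_eq_true, Bool.and_eq_true,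
        decide_eq_true_eq, Sum.inr.injEq]
      constructor
      · rintro ⟨hor, hrc⟩
        rcases hor with hc | rfl
        · exact absurd hc (by simp)
        · split_ifs with hg
          · simp
          · exact absurd hrc (by omega)
      · intro hcm
        split_ifs at hcm with hg
        · simp at hcm
          subst hcm
          exact ⟨Or.inr rfl, by omega⟩
        · simp at hcm
  have hends : ∀ g, (endsL n r s g).filter p = if e = g then [y] else [] := by
    intro g
    rw [endsL, List.filter_map, List.filter_filter,
      filter_finRange_eval _ (if e = g then [i] else []) ?_ ?_]
    · split_ifs <;> simp [hy]
    · split_ifs <;> simp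
    · intro c
      simp only [Function.comp, hp, hx, hy, Bool.or_eq_true, Bool.and_eq_true,
        decide_eq_true_eq, Sum.inr.injEq]
      constructor
      · rintro ⟨hor, hrc⟩
        rcases hor with hc | rfl
        · exact absurd hc (by simp)
        · split_ifs with hg
          · simp
          · exact absurd hrc (by omega)
      · intro hcm
        split_ifs at hcm with hg
        · simp at hcm
          subst hcm
          exact ⟨Or.inr rfl, by omega⟩
        · simp at hcm
  have hcol : ∀ g, (colL m τ g).filter p = if g = j then [x] else [] := by
    intro g
    rw [colL, List.filter_map, List.filter_filter,
      filter_finRange_eval _ (if g = j then [jf] else []) ?_ ?_]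
    · split_ifs <;> simp [hx, hjf]
    · split_ifs <;> simp
    · intro c
      simp only [Function.comp, hp, hx, hy, Bool.or_eq_true, Bool.and_eq_true,
        decide_eq_true_eq, Sum.inl.injEq, Equiv.apply_eq_iff_eq_symm_apply, ← hjf]
      split_ifs with hg <;> simp [Fin.ext_iff] <;> omega
  have htail : (((List.range (n+1)).flatMap (startsL n r)).reverse).filter p = [y] := by
    rw [List.filter_reverse, List.filter_flatMap]
    simp only [hstarts]
    rw [flatMap_range_eval _ _ [a] (by simp) (by simp; omega)
      (by intro g hg hgk; simp at hgk; split_ifs <;> simp_all)]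
    simp
  have hb2 : ((List.finRange n).map (fun c => Sum.inl (τ c))).filter p = [x] := by
    rw [List.filter_map, filter_finRange_eval _ [jf] (by simp) ?_]
    · simp [hx, hjf]
    · intro c
      simp only [Function.comp, hp, hx, hy, Bool.or_eq_true,
        decide_eq_true_eq, Sum.inl.injEq, Equiv.apply_eq_iff_eq_symm_apply, ← hjf]
      simp
  rw [repWord, List.filter_append, List.filter_append, List.filter_flatMap, htail, hb2]
  simp only [List.filter_append, hstarts, hends, hcol]
  by_cases hadj : a ≤ j ∧ j < e
  · refine iff_of_true ?_ hadj
    rcases Nat.lt_or_ge a j with haj | haj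
    · rw [flatMap_range_eval _ _ [a, j, e]
        (by simp; omega) (by simp; omega)
        (by intro g hg hgk; simp at hgk; split_ifs <;> simp_all)]
      have h1 : ¬ a = j := by omega
      have h2 : ¬ e = j := by omega
      have h3 : ¬ a = e := by omega
      have h4 : ¬ j = e := by omega
      have h5 : ¬ e = a := by omega
      have h6 : ¬ a = j := by omega
      have h7 : ¬ j = a := by omega
      simp [h1, h2, h3, h4, h5, h6, h7, List.Chain', List.isChain_cons_cons, hxy, hyx]
    · have haj' : a = j := by omega
      rw [flatMap_range_eval _ _ [a, e]
        (by simp; omega) (by simp; omega)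
        (by intro g hg hgk; simp at hgk; split_ifs <;> simp_all)]
      have h1 : ¬ e = a := by omega
      have h2 : ¬ e = j := by omega
      have h3 : ¬ a = e := by omega
      have h4 : ¬ j = e := by omega
      have h5 : a = j := by omega
      simp [h1, h2, h3, h4, h5, List.Chain', List.isChain_cons_cons, hxy, hyx]
  · refine iff_of_false ?_ hadj
    rcases Nat.lt_or_ge j a with hja | hja
    · -- j < a : pattern [x,y,y] ++ [x] ++ [y]
      rcases Nat.lt_or_ge a e with hae' | hae'
      · rw [flatMap_range_eval _ _ [j, a, e]
          (by simp; omega) (by simp; omega)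
          (by intro g hg hgk; simp at hgk; split_ifs <;> simp_all)]
        have h1 : ¬ a = j := by omega
        have h2 : ¬ e = j := by omega
        have h3 : ¬ e = a := by omega
        have h4 : ¬ a = e := by omega
        have h5 : ¬ j = a := by omega
        have h6 : ¬ j = e := by omega
        simp [h1, h2, h3, h4, h5, h6, List.Chain', List.isChain_cons_cons]
      · have hae'' : a = e := by omega
        rw [flatMap_range_eval _ _ [j, a]
          (by simp; omega) (by simp; omega)
          (by intro g hg hgk; simp at hgk; split_ifs <;> simp_all)]
        have h1 : ¬ a = j := by omega
        have h2 : ¬ e = j := by omega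
        have h3 : ¬ j = a := by omega
        simp [h1, h2, h3, ← hae'', List.Chain', List.isChain_cons_cons]
    · -- e ≤ j : pattern [y,y,x] ++ [x] ++ [y]
      have hej : e ≤ j := by omega
      rcases Nat.lt_or_ge a e with hae' | hae'
      · rcases Nat.lt_or_ge e j with hej' | hej'
        · rw [flatMap_range_eval _ _ [a, e, j]
            (by simp; omega) (by simp; omega)
            (by intro g hg hgk; simp at hgk; split_ifs <;> simp_all)]
          have h1 : ¬ e = a := by omega
          have h2 : ¬ a = j := by omega
          have h3 : ¬ e = j := by omega
          have h4 : ¬ a = e := by omega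
          have h5 : ¬ j = a := by omega
          have h6 : ¬ j = e := by omega
          simp [h1, h2, h3, h4, h5, h6, List.Chain', List.isChain_cons_cons]
        · have hej'' : e = j := by omega
          rw [flatMap_range_eval _ _ [a, j]
            (by simp; omega) (by simp; omega)
            (by intro g hg hgk; simp at hgk; split_ifs <;> simp_all)]
          have h1 : ¬ a = j := by omega
          have h2 : ¬ j = a := by omega
          have h3 : ¬ a = e := by omega
          simp [h1, h2, h3, hej'', List.Chain', List.isChain_cons_cons]
      · have hae'' : a = e := by omega
        rcases Nat.lt_or_ge e j with hej' | hej'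
        · rw [flatMap_range_eval _ _ [a, j]
            (by simp; omega) (by simp; omega)
            (by intro g hg hgk; simp at hgk; split_ifs <;> simp_all)]
          have h1 : ¬ a = j := by omega
          have h2 : ¬ e = j := by omega
          have h3 : ¬ j = a := by omega
          have h4 : ¬ j = e := by omega
          simp [h1, h2, h3, h4, ← hae'', List.Chain', List.isChain_cons_cons]
        · have hej'' : e = j := by omega
          rw [flatMap_range_eval _ _ [a]
            (by simp) (by simp; omega)
            (by intro g hg hgk; simp at hgk; split_ifs <;> simp_all)]
          have c1 : e = a := by omega
          have c2 : a = j := by omega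
          simp [c1, c2, List.Chain', List.isChain_cons_cons]


private lemma chain_inr_inr (hrs : ∀ i, r i + s i ≤ n) (i i' : Fin m)
    (hlex : r i < r i' ∨ (r i = r i' ∧ i < i')) :
    ¬ (((repWord τ r s).filter
      (fun z => decide (z = (Sum.inr i : Fin n ⊕ Fin m)) || decide (z = Sum.inr i'))).Chain'
      (· ≠ ·)) := by
  set x : Fin n ⊕ Fin m := Sum.inr i with hx
  set y : Fin n ⊕ Fin m := Sum.inr i' with hy
  set p : Fin n ⊕ Fin m → Bool := fun z => decide (z = x) || decide (z = y) with hp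
  set a := r i with ha
  set e := r i + s i with he
  set a' := r i' with ha'
  set e' := r i' + s i' with he'
  have hii : i ≠ i' := by
    rintro rfl
    rcases hlex with h | h
    · omega
    · exact absurd h.2 (lt_irrefl i)
  have hxy : x ≠ y := by simp [hx, hy, hii]
  have haa : a ≤ a' := by rcases hlex with h | h <;> omega
  have hen : e ≤ n := hrs i
  have he'n : e' ≤ n := hrs i'
  have hae : a ≤ e := by omega
  have ha'e' : a' ≤ e' := by omega
  have hpx : p x = true := by simp [hp]
  have hpy : p y = true := by simp [hp]
  have hcoln : ∀ g, (colL m τ g).filter p = [] := by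
    intro g
    rw [colL, List.filter_map, List.filter_eq_nil_iff.2 (fun c _ => ?_)]
    · simp
    · simp [hp, hx, hy, Function.comp]
  have hstartsF : ∀ g, (startsL n r g).filter p =
      (if a = g then [x] else []) ++ (if a' = g then [y] else []) := by
    intro g
    rw [startsL, List.filter_map, List.filter_filter,
      filter_finRange_eval _ ((if a = g then [i] else []) ++ (if a' = g then [i'] else [])) ?_ ?_]
    · split_ifs <;> simp [hx, hy]
    · split_ifs with h1 h2 <;> simp
      rcases hlex with h | h
      · omega
      · exact h.2
    · intro c
      simp only [Function.comp, hp, hx, hy, Bool.or_eq_true, Bool.and_eq_true,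
        decide_eq_true_eq, Sum.inr.injEq, List.mem_append]
      constructor
      · rintro ⟨rfl | rfl, hrc⟩
        · exact Or.inl (by rw [if_pos (show a = g by omega)]; simp)
        · exact Or.inr (by rw [if_pos (show a' = g by omega)]; simp)
      · intro hcm
        rcases hcm with hcm | hcm <;> split_ifs at hcm with hg <;> simp at hcm <;> subst hcm
        · exact ⟨Or.inl rfl, by omega⟩
        · exact ⟨Or.inr rfl, by omega⟩
  have hends_nil : ∀ g, g < a → (endsL n r s g).filter p = [] := by
    intro g hg
    rw [endsL, List.filter_map, List.filter_eq_nil_iff.2 (fun c hc => ?_)]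
    · simp
    · simp only [List.mem_filter, decide_eq_true_eq] at hc
      simp only [Function.comp, hp, hx, hy, Bool.or_eq_true, decide_eq_true_eq,
        Sum.inr.injEq, not_or]
      constructor <;> rintro rfl <;> omega
  have hb2nil : ((List.finRange n).map (fun c => Sum.inl (τ c))).filter p = [] := by
    rw [List.filter_map, List.filter_eq_nil_iff.2 (fun c _ => ?_)]
    · simp
    · simp [hp, hx, hy, Function.comp]
  have htail : (((List.range (n+1)).flatMap (startsL n r)).reverse).filter p = [y, x] := by
    rw [List.filter_reverse, List.filter_flatMap]
    simp only [hstartsF]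
    rcases Nat.lt_or_ge a a' with hlt | hge
    · rw [flatMap_range_eval _ _ [a, a'] (by simp [hlt]) (by simp; omega)
        (by intro g hg hgk; simp at hgk; split_ifs <;> simp_all)]
      have h1 : ¬ a = a' := by omega
      have h2 : ¬ a' = a := by omega
      simp [h1, h2]
    · have heq : a = a' := by omega
      rw [flatMap_range_eval _ _ [a] (by simp) (by simp; omega)
        (by intro g hg hgk; simp at hgk; split_ifs <;> simp_all)]
      simp [← heq]
  rw [repWord, List.filter_append, List.filter_append, hb2nil, htail]
  simp only [List.append_nil, List.nil_append]
  refine no_alt x y hxy _ ?_ ?_ ?_ ?_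
  · rw [List.countP_filter]
    have hpe : (fun z => decide (z = x) && p z) = (fun z => decide (z = x)) := by
      funext z
      by_cases hz : z = x <;> simp [hz, hp]
    rw [hpe, List.countP_flatMap]
    have hfun : (List.countP (fun z => decide (z = x)) ∘
          fun g => startsL n r g ++ endsL n r s g ++ colL m τ g)
        = fun g => ((if g = a then 1 else 0) + (if g = e then 1 else 0)) := by
      funext g
      simp only [Function.comp, List.countP_append]
      have h1 : (startsL n r g).countP (fun z => decide (z = x)) = if g = a then 1 else 0 := by
        rw [startsL, List.countP_map]
        have hfe : ((fun z => decide (z = x)) ∘ (Sum.inr : Fin m → Fin n ⊕ Fin m))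
            = fun b => decide (b = i) := by
          funext b
          simp [Function.comp, hx]
        rw [hfe, cntP_filter _ (List.nodup_finRange m) _ _ (List.mem_finRange i)]
        simp only [decide_eq_true_eq]
        split_ifs <;> omega
      have h2 : (endsL n r s g).countP (fun z => decide (z = x)) = if g = e then 1 else 0 := by
        rw [endsL, List.countP_map]
        have hfe : ((fun z => decide (z = x)) ∘ (Sum.inr : Fin m → Fin n ⊕ Fin m))
            = fun b => decide (b = i) := by
          funext b
          simp [Function.comp, hx]
        rw [hfe, cntP_filter _ (List.nodup_finRange m) _ _ (List.mem_finRange i)]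
        simp only [decide_eq_true_eq]
        split_ifs <;> omega
      have h3 : (colL m τ g).countP (fun z => decide (z = x)) = 0 := by
        rw [List.countP_eq_zero]
        intro z hz
        simp only [colL, List.mem_map] at hz
        obtain ⟨c, _, rfl⟩ := hz
        simp [hx]
      rw [h1, h2, h3]
      omega
    rw [hfun, sum_map_add, sum_map_ite, sum_map_ite]
    have h1 : a < n + 1 := by omega
    have h2 : e < n + 1 := by omega
    simp [h1, h2]
  · rw [List.countP_filter]
    have hpe : (fun z => decide (z = y) && p z) = (fun z => decide (z = y)) := by
      funext z
      by_cases hz : z = y <;> simp [hz, hp]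
    rw [hpe, List.countP_flatMap]
    have hfun : (List.countP (fun z => decide (z = y)) ∘
          fun g => startsL n r g ++ endsL n r s g ++ colL m τ g)
        = fun g => ((if g = a' then 1 else 0) + (if g = e' then 1 else 0)) := by
      funext g
      simp only [Function.comp, List.countP_append]
      have h1 : (startsL n r g).countP (fun z => decide (z = y)) = if g = a' then 1 else 0 := by
        rw [startsL, List.countP_map]
        have hfe : ((fun z => decide (z = y)) ∘ (Sum.inr : Fin m → Fin n ⊕ Fin m))
            = fun b => decide (b = i') := by
          funext b
          simp [Function.comp, hy]
        rw [hfe, cntP_filter _ (List.nodup_finRange m) _ _ (List.mem_finRange i')]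
        simp only [decide_eq_true_eq]
        split_ifs <;> omega
      have h2 : (endsL n r s g).countP (fun z => decide (z = y)) = if g = e' then 1 else 0 := by
        rw [endsL, List.countP_map]
        have hfe : ((fun z => decide (z = y)) ∘ (Sum.inr : Fin m → Fin n ⊕ Fin m))
            = fun b => decide (b = i') := by
          funext b
          simp [Function.comp, hy]
        rw [hfe, cntP_filter _ (List.nodup_finRange m) _ _ (List.mem_finRange i')]
        simp only [decide_eq_true_eq]
        split_ifs <;> omega
      have h3 : (colL m τ g).countP (fun z => decide (z = y)) = 0 := by
        rw [List.countP_eq_zero]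
        intro z hz
        simp only [colL, List.mem_map] at hz
        obtain ⟨c, _, rfl⟩ := hz
        simp [hy]
      rw [h1, h2, h3]
      omega
    rw [hfun, sum_map_add, sum_map_ite, sum_map_ite]
    have h1 : a' < n + 1 := by omega
    have h2 : e' < n + 1 := by omega
    simp [h1, h2]
  · intro z hz
    rw [List.mem_filter] at hz
    have := hz.2
    simp only [hp, Bool.or_eq_true, decide_eq_true_eq] at this
    exact this
  · rw [List.filter_flatMap]
    rw [flatMap_range_split (n+1) a (by omega) _ ?_]
    · rw [List.filter_append, List.filter_append, hstartsF a, if_pos rfl, hcoln]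
      simp [List.head?_append]
    · intro g hg
      rw [List.filter_append, List.filter_append, hstartsF g, hends_nil g (by omega), hcoln]
      have h1 : ¬ a = g := by omega
      have h2 : ¬ a' = g := by omega
      simp [h1, h2]


end Chain


theorem stmt3 {m n : ℕ} (M : Fin m → Fin n → Bool)
    (h : ∃ τ : Equiv.Perm (Fin n), ∀ i, ∃ r s t : ℕ, r + s + t = n ∧
      ∀ j : Fin n, M i (τ j) = true ↔ (r ≤ (j : ℕ) ∧ (j : ℕ) < r + s)) :
    WordRepresentable (splitGraph M) := by
  obtain ⟨τ, hτ⟩ := h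
  choose r s t hsum hM using hτ
  have hrs : ∀ i, r i + s i ≤ n := fun i => by have := hsum i; omega
  refine ⟨repWord τ r s, ?_, ?_⟩
  · intro v
    rw [repWord]
    rcases v with j' | i
    · refine List.mem_append.2 (Or.inl (List.mem_append.2 (Or.inr ?_)))
      simp only [List.mem_map]
      exact ⟨τ.symm j', List.mem_finRange _, by simp⟩
    · refine List.mem_append.2 (Or.inr ?_)
      rw [List.mem_reverse, List.mem_flatMap]
      refine ⟨r i, ?_, ?_⟩
      · simp only [List.mem_range]
        have := hsum i
        omega
      · rw [startsL]
        simp only [List.mem_map, List.mem_filter]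
        exact ⟨i, ⟨List.mem_finRange i, by simp⟩, rfl⟩
  · intro x y hxy
    show (splitGraph M).Adj x y ↔
      ((repWord τ r s).filter (fun z => decide (z = x) || decide (z = y))).Chain' (· ≠ ·)
    rcases x with j₁ | i₁ <;> rcases y with j₂ | i₂
    · -- clique-clique
      have hne : j₁ ≠ j₂ := by simpa using hxy
      refine iff_of_true ?_ (chain_inl_inl τ r s j₁ j₂ hne)
      rw [splitGraph, SimpleGraph.fromRel_adj]
      exact ⟨hxy, Or.inl trivial⟩
    · -- clique-independent
      have hAdj : (splitGraph M).Adj (Sum.inl j₁) (Sum.inr i₂) ↔ M i₂ j₁ = true := by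
        rw [splitGraph, SimpleGraph.fromRel_adj]
        simp
      have hM' : M i₂ j₁ = true ↔
          (r i₂ ≤ ((τ.symm j₁ : Fin n) : ℕ) ∧ ((τ.symm j₁ : Fin n) : ℕ) < r i₂ + s i₂) := by
        have := hM i₂ (τ.symm j₁)
        rwa [Equiv.apply_symm_apply] at this
      rw [hAdj, hM']
      exact (chain_inl_inr τ r s hrs j₁ i₂).symm
    · -- independent-clique
      have hAdj : (splitGraph M).Adj (Sum.inr i₁) (Sum.inl j₂) ↔ M i₁ j₂ = true := by
        rw [splitGraph, SimpleGraph.fromRel_adj]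
        simp
      have hM' : M i₁ j₂ = true ↔
          (r i₁ ≤ ((τ.symm j₂ : Fin n) : ℕ) ∧ ((τ.symm j₂ : Fin n) : ℕ) < r i₁ + s i₁) := by
        have := hM i₁ (τ.symm j₂)
        rwa [Equiv.apply_symm_apply] at this
      rw [hAdj, hM']
      rw [List.filter_congr (l := repWord τ r s)
        (q := fun z => decide (z = (Sum.inl j₂ : Fin n ⊕ Fin m)) || decide (z = Sum.inr i₁))
        (fun z _ => Bool.or_comm _ _)]
      exact (chain_inl_inr τ r s hrs j₂ i₁).symm
    · -- independent-independent
      have hii : i₁ ≠ i₂ := by simpa using hxy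
      have hAdj : ¬ (splitGraph M).Adj (Sum.inr i₁) (Sum.inr i₂) := by
        rw [splitGraph, SimpleGraph.fromRel_adj]
        simp
      refine iff_of_false hAdj ?_
      rcases Nat.lt_trichotomy (r i₁) (r i₂) with hlt | heq | hgt
      · exact chain_inr_inr τ r s hrs i₁ i₂ (Or.inl hlt)
      · rcases hii.lt_or_gt with hlt | hlt
        · exact chain_inr_inr τ r s hrs i₁ i₂ (Or.inr ⟨heq, hlt⟩)
        · rw [List.filter_congr (l := repWord τ r s)
            (q := fun z => decide (z = (Sum.inr i₂ : Fin n ⊕ Fin m)) || decide (z = Sum.inr i₁))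
            (fun z _ => Bool.or_comm _ _)]
          exact chain_inr_inr τ r s hrs i₂ i₁ (Or.inr ⟨heq.symm, hlt⟩)
      · rw [List.filter_congr (l := repWord τ r s)
          (q := fun z => decide (z = (Sum.inr i₂ : Fin n ⊕ Fin m)) || decide (z = Sum.inr i₁))
          (fun z _ => Bool.or_comm _ _)]
        exact chain_inr_inr τ r s hrs i₂ i₁ (Or.inl hgt)
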